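/- Let μ be the discrete measure Σⱼ (1−|zⱼ|²) δ_{zⱼ} associated to a finite uniformly separated sequence (z₁,…,zₙ) in the unit disk with separation constant δ_σ. Then sup over a ∈ supp(μ) of ∫_𝔻 |k_a(z)|² dμ(z) is at most 1 + 2 log(1/δ_σ), where k_a(z) = √(1−|a|²)/(1−\bar{a}z) is the normalized reproducing kernel. -/

import Mathlib

open Complex Metric Set ComplexConjugate

/-- The `p`-integral mean of `f` on the circle of radius `r`. -/
noncomputable def circleMean (p : ℝ) (f : ℂ → ℂ) (r : ℝ) : ℝ :=
  ((2 * Real.pi)⁻¹ *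
      ∫ θ in (0:ℝ)..(2 * Real.pi),
        ‖f (r * Complex.exp (θ * Complex.I))‖ ^ p) ^ (1 / p)

/-- The Hardy space `H^p` norm of `f`. -/
noncomputable def hardyNorm (p : ℝ) (f : ℂ → ℂ) : ℝ :=
  sSup {m : ℝ | ∃ r : ℝ, 0 ≤ r ∧ r < 1 ∧ m = circleMean p f r}

/-- Membership in the Hardy space `H^p` of the unit disk. -/
def MemHp (p : ℝ) (f : ℂ → ℂ) : Prop :=
  DifferentiableOn ℂ f (ball (0:ℂ) 1) ∧
    BddAbove {m : ℝ | ∃ r : ℝ, 0 ≤ r ∧ r < 1 ∧ m = circleMean p f r}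

/-- The norm, in the dual space `(H^p)^*`, of a (not necessarily linear) functional `L`. -/
noncomputable def dualNormHp (p : ℝ) (L : (ℂ → ℂ) → ℂ) : ℝ :=
  sSup {m : ℝ | ∃ f : ℂ → ℂ, MemHp p f ∧ hardyNorm p f ≤ 1 ∧ m = ‖L f‖}

/-- The sup norm of `f` over the unit disk. -/
noncomputable def supNormDisk (f : ℂ → ℂ) : ℝ :=
  sSup {m : ℝ | ∃ z ∈ ball (0:ℂ) 1, m = ‖f z‖}

/-- Membership in `H^∞`: bounded analytic functions on the unit disk. -/
def MemHinf (f : ℂ → ℂ) : Prop :=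
  DifferentiableOn ℂ f (ball (0:ℂ) 1) ∧
    BddAbove {m : ℝ | ∃ z ∈ ball (0:ℂ) 1, m = ‖f z‖}

/-- The interpolation constant `κ_σ` of a finite sequence of points of the unit disk. -/
noncomputable def interpConst {n : ℕ} (z : Fin n → ℂ) : ℝ :=
  sSup {m : ℝ | ∃ a : Fin n → ℂ, (∀ j, ‖a j‖ ≤ 1) ∧
    m = sInf {t : ℝ | ∃ f : ℂ → ℂ, MemHinf f ∧ (∀ j, f (z j) = a j) ∧ t = supNormDisk f}}

/-- The uniform separation constant `δ_σ` of a finite sequence of points of the unit disk. -/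
noncomputable def sepConst {n : ℕ} (z : Fin n → ℂ) : ℝ :=
  sInf {m : ℝ | ∃ j : Fin n,
    m = ∏ k ∈ Finset.univ.filter (fun k => k ≠ j),
          ‖(z j - z k) / (1 - conj (z j) * z k)‖}


private lemma normSq_identity (a b : ℂ) :
    Complex.normSq (1 - conj a * b) - Complex.normSq (a - b)
      = (1 - Complex.normSq a) * (1 - Complex.normSq b) := by
  simp only [Complex.normSq_apply, Complex.sub_re, Complex.sub_im, Complex.mul_re,
    Complex.mul_im, Complex.conj_re, Complex.conj_im, Complex.one_re, Complex.one_im]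
  ring

private lemma denom_ne {a b : ℂ} (ha : ‖a‖ < 1) (hb : ‖b‖ < 1) :
    (1 : ℂ) - conj a * b ≠ 0 := by
  intro h
  have h1 : conj a * b = 1 := by linear_combination -h
  have h2 : ‖conj a * b‖ = 1 := by rw [h1]; simp
  rw [norm_mul, Complex.norm_conj] at h2
  nlinarith [norm_nonneg a, norm_nonneg b]

/-- For the discrete measure `μ = ∑ₖ (1−|zₖ|²) δ_{zₖ}` of a finite uniformly separated sequence,
the integrals of the squared normalized reproducing kernels `k_a`, `a ∈ supp μ`, are bounded by
`1 + 2 log(1/δ_σ)`. -/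
theorem reproducing_kernel_test_discrete_measure (n : ℕ) (hn : 0 < n)
    (z : Fin n → ℂ) (hz : ∀ j, z j ∈ ball (0:ℂ) 1) (hdist : Function.Injective z)
    (j : Fin n) :
    ∑ k, (1 - ‖z k‖ ^ 2) *
        ‖(Real.sqrt (1 - ‖z j‖ ^ 2) : ℂ) /
          (1 - conj (z j) * z k)‖ ^ 2 ≤
      1 + 2 * Real.log (1 / sepConst z) := by
  have hj1 : ‖z j‖ < 1 := by simpa using hz j
  set ρ : Fin n → ℝ := fun k => ‖(z j - z k) / (1 - conj (z j) * z k)‖ with hρdef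
  -- each term equals 1 - ρ k ^ 2
  have hterm : ∀ k, (1 - ‖z k‖ ^ 2) *
      ‖(Real.sqrt (1 - ‖z j‖ ^ 2) : ℂ) /
        (1 - conj (z j) * z k)‖ ^ 2 = 1 - ρ k ^ 2 := by
    intro k
    have hk1 : ‖z k‖ < 1 := by simpa using hz k
    have hd := denom_ne hj1 hk1
    have hdpos : 0 < ‖1 - conj (z j) * z k‖ := norm_pos_iff.mpr hd
    have hsqrt : ‖(Real.sqrt (1 - ‖z j‖ ^ 2) : ℂ)‖
        = Real.sqrt (1 - ‖z j‖ ^ 2) := by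
      rw [Complex.norm_real, Real.norm_eq_abs, _root_.abs_of_nonneg (Real.sqrt_nonneg _)]
    have hnn : (0:ℝ) ≤ 1 - ‖z j‖ ^ 2 := by nlinarith [norm_nonneg (z j)]
    have hid := normSq_identity (z j) (z k)
    rw [← Complex.sq_norm (z j), ← Complex.sq_norm (z k),
      ← Complex.sq_norm (1 - conj (z j) * z k), ← Complex.sq_norm (z j - z k)] at hid
    have hst : ρ k ^ 2 = ‖z j - z k‖ ^ 2 /
        ‖1 - conj (z j) * z k‖ ^ 2 := by
      rw [hρdef]; simp only [norm_div, div_pow]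
    rw [hst, norm_div, div_pow, hsqrt, Real.sq_sqrt hnn]
    have h2 : 1 - ‖z j - z k‖ ^ 2 / ‖1 - conj (z j) * z k‖ ^ 2
        = (‖1 - conj (z j) * z k‖ ^ 2 - ‖z j - z k‖ ^ 2) /
          ‖1 - conj (z j) * z k‖ ^ 2 := by
      rw [sub_div, div_self (pow_ne_zero 2 hdpos.ne')]
    rw [h2, hid]
    ring
  have hρ_nonneg : ∀ k, 0 ≤ ρ k := fun k => norm_nonneg _
  have hρ_le : ∀ k, ρ k ≤ 1 := by
    intro k
    have h1 : 0 ≤ 1 - ρ k ^ 2 := by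
      rw [← hterm k]
      have hk1 : ‖z k‖ < 1 := by simpa using hz k
      have h2 : (0:ℝ) ≤ 1 - ‖z k‖ ^ 2 := by
        nlinarith [norm_nonneg (z k)]
      exact mul_nonneg h2 (sq_nonneg _)
    nlinarith [hρ_nonneg k]
  have hρ_pos : ∀ k, k ≠ j → 0 < ρ k := by
    intro k hk
    refine norm_pos_iff.mpr (div_ne_zero ?_ (denom_ne hj1 (by simpa using hz k)))
    intro h
    exact hk (hdist (sub_eq_zero.mp h)).symm
  -- the products
  set P : Fin n → ℝ := fun i => ∏ k ∈ Finset.univ.filter (fun k => k ≠ i),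
      ‖(z i - z k) / (1 - conj (z i) * z k)‖ with hPdef
  have hPj : P j = ∏ k ∈ Finset.univ.erase j, ρ k := by
    simp only [hPdef, hρdef, Finset.filter_ne']
  have hPpos : ∀ i, 0 < P i := by
    intro i
    have hi1 : ‖z i‖ < 1 := by simpa using hz i
    refine Finset.prod_pos fun k hk => ?_
    refine norm_pos_iff.mpr (div_ne_zero ?_ (denom_ne hi1 (by simpa using hz k)))
    intro h
    exact (Finset.mem_filter.1 hk).2 (hdist (sub_eq_zero.mp h)).symm
  -- sepConst facts
  have hSrange : {m : ℝ | ∃ i : Fin n,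
      m = ∏ k ∈ Finset.univ.filter (fun k => k ≠ i),
        ‖(z i - z k) / (1 - conj (z i) * z k)‖} = Set.range P := by
    ext m; simp [hPdef, eq_comm]
  have hfin : ({m : ℝ | ∃ i : Fin n,
      m = ∏ k ∈ Finset.univ.filter (fun k => k ≠ i),
        ‖(z i - z k) / (1 - conj (z i) * z k)‖}).Finite := by
    rw [hSrange]; exact Set.finite_range P
  have hne : ({m : ℝ | ∃ i : Fin n,
      m = ∏ k ∈ Finset.univ.filter (fun k => k ≠ i),
        ‖(z i - z k) / (1 - conj (z i) * z k)‖}).Nonempty := ⟨P j, j, rfl⟩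
  have hmem : sepConst z ∈ _ := hne.csInf_mem hfin
  obtain ⟨i, hi⟩ := hmem
  have hsep_pos : 0 < sepConst z := by rw [hi]; exact hPpos i
  have hsep_le : sepConst z ≤ P j := csInf_le hfin.bddBelow ⟨j, rfl⟩
  -- pointwise log bound
  have hpt : ∀ k ∈ Finset.univ.erase j, 1 - ρ k ^ 2 ≤ 2 * (- Real.log (ρ k)) := by
    intro k hk
    have hkj : k ≠ j := (Finset.mem_erase.1 hk).1
    have h1 := Real.log_le_sub_one_of_pos (hρ_pos k hkj)
    nlinarith [hρ_le k, hρ_pos k hkj]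
  have hρj : ρ j = 0 := by simp [hρdef]
  calc ∑ k, (1 - ‖z k‖ ^ 2) *
        ‖(Real.sqrt (1 - ‖z j‖ ^ 2) : ℂ) /
          (1 - conj (z j) * z k)‖ ^ 2
      = ∑ k, (1 - ρ k ^ 2) := Finset.sum_congr rfl fun k _ => hterm k
    _ = (1 - ρ j ^ 2) + ∑ k ∈ Finset.univ.erase j, (1 - ρ k ^ 2) :=
        (Finset.add_sum_erase _ _ (Finset.mem_univ j)).symm
    _ = 1 + ∑ k ∈ Finset.univ.erase j, (1 - ρ k ^ 2) := by rw [hρj]; ring_nf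
    _ ≤ 1 + ∑ k ∈ Finset.univ.erase j, 2 * (- Real.log (ρ k)) := by
        gcongr with k hk
        · exact hpt k hk
    _ = 1 + 2 * (- Real.log (P j)) := by
        rw [hPj, Real.log_prod (fun k hk => (hρ_pos k (Finset.mem_erase.1 hk).1).ne'),
          ← Finset.sum_neg_distrib, Finset.mul_sum]
    _ ≤ 1 + 2 * Real.log (1 / sepConst z) := by
        rw [one_div, Real.log_inv]
        have := Real.log_le_log hsep_pos hsep_le
        linarith
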